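/- If K : (0,∞) → ℝ is locally integrable, eventually decreasing, tends to 0 at infinity, and satisfies K(t) ~ t^{-1} as t → ∞ (i.e., t·K(t) → C₁ > 0), then K_cos(ω) := ∫₀^∞ K(t) cos(ωt) dt satisfies K_cos(ω) / |log ω| → C₁ as ω → 0⁺. -/

import Mathlib

open MeasureTheory Filter Set Real

lemma aux_cos_period (ω : ℝ) (hω : 0 < ω) (c : ℝ) :
    ∫ t in c..(c + 2*π/ω), Real.cos (ω*t) = 0 := by
  have hω' : ω ≠ 0 := ne_of_gt hω
  have h := intervalIntegral.integral_comp_mul_left (a := c) (b := c + 2*π/ω)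
    (f := fun x => Real.cos x) hω'
  rw [h, integral_cos]
  have : ω * (c + 2*π/ω) = ω*c + 2*π := by field_simp
  rw [this, Real.sin_add_two_pi, sub_self, smul_zero]

lemma aux_period {K : ℝ → ℝ} {ω c : ℝ} (hω : 0 < ω)
    (hint : IntervalIntegrable K volume c (c + 2*π/ω))
    (hbd : ∀ t ∈ Set.Icc c (c + 2*π/ω), K (c + 2*π/ω) ≤ K t ∧ K t ≤ K c) :
    |∫ t in c..(c + 2*π/ω), K t * Real.cos (ω*t)| ≤ (2*π/ω) * (K c - K (c + 2*π/ω)) := by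
  have hL : 0 < 2*π/ω := by positivity
  set L := 2*π/ω with hLdef
  set m := K (c + L) with hmdef
  have hcont : Continuous (fun t : ℝ => Real.cos (ω*t)) :=
    Real.continuous_cos.comp (continuous_const.mul continuous_id)
  have hcc : IntervalIntegrable (fun t => Real.cos (ω*t)) volume c (c+L) :=
    hcont.intervalIntegrable _ _
  have hKc : IntervalIntegrable (fun t => K t * Real.cos (ω*t)) volume c (c+L) :=
    hint.mul_continuousOn hcont.continuousOn
  have key : ∫ t in c..(c+L), K t * Real.cos (ω*t)
      = ∫ t in c..(c+L), (K t - m) * Real.cos (ω*t) := by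
    have e : ∀ t : ℝ, (K t - m) * Real.cos (ω*t)
        = K t * Real.cos (ω*t) - m * Real.cos (ω*t) := fun t => by ring
    simp_rw [e]
    rw [intervalIntegral.integral_sub hKc (hcc.const_mul m),
      intervalIntegral.integral_const_mul, aux_cos_period ω hω c, mul_zero, sub_zero]
  rw [key]
  have hb : ∀ x ∈ Set.uIoc c (c+L), ‖(K x - m) * Real.cos (ω*x)‖ ≤ K c - m := by
    intro x hx
    rw [Set.uIoc_of_le (by linarith)] at hx
    have hx' : x ∈ Set.Icc c (c+L) := ⟨le_of_lt hx.1, hx.2⟩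
    obtain ⟨h1, h2⟩ := hbd x hx'
    rw [Real.norm_eq_abs, abs_mul]
    have : |K x - m| = K x - m := abs_of_nonneg (by linarith)
    rw [this]
    calc (K x - m) * |Real.cos (ω*x)| ≤ (K x - m) * 1 :=
          mul_le_mul_of_nonneg_left (Real.abs_cos_le_one _) (by linarith)
      _ ≤ K c - m := by linarith
  have := intervalIntegral.norm_integral_le_of_norm_le_const hb
  rw [Real.norm_eq_abs] at this
  calc |∫ t in c..(c+L), (K t - m) * Real.cos (ω*t)| ≤ (K c - m) * |c + L - c| := this
    _ = L * (K c - m) := by rw [add_sub_cancel_left, abs_of_pos hL]; ring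

lemma aux_tail {K : ℝ → ℝ} {ω a b : ℝ} (hω : 0 < ω) (hab : a ≤ b)
    (hanti : AntitoneOn K (Set.Ici a))
    (hnn : ∀ t, a ≤ t → 0 ≤ K t)
    (hint : ∀ c d : ℝ, a ≤ c → c ≤ d → IntervalIntegrable K volume c d) :
    |∫ t in a..b, K t * Real.cos (ω*t)| ≤ 4*π/ω * K a := by
  have hL : 0 < 2*π/ω := by positivity
  set L := 2*π/ω with hLdef
  set c : ℕ → ℝ := fun k => a + k*L with hcdef
  set N : ℕ := ⌊(b-a)/L⌋₊ with hNdef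
  have hca : ∀ k : ℕ, a ≤ c k := by
    intro k; simp only [hcdef]; nlinarith [Nat.cast_nonneg (α := ℝ) k]
  have hcsucc : ∀ k : ℕ, c (k+1) = c k + L := by
    intro k; simp only [hcdef]; push_cast; ring
  have hc0 : c 0 = a := by simp [hcdef]
  have hcN : c N ≤ b := by
    have h1 : (N : ℝ) ≤ (b-a)/L := Nat.floor_le (div_nonneg (by linarith) hL.le)
    have h2 : (N : ℝ) * L ≤ b - a := (le_div_iff₀ hL).mp h1
    simp only [hcdef]
    linarith
  have hbcN : b ≤ c N + L := by
    have h1 : (b-a)/L < N + 1 := Nat.lt_floor_add_one _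
    have : b - a < (N+1)*L := by
      calc b - a = ((b-a)/L) * L := by field_simp
        _ < (N+1)*L := by nlinarith
    simp only [hcdef]; linarith
  have hcont : Continuous (fun t : ℝ => Real.cos (ω*t)) :=
    Real.continuous_cos.comp (continuous_const.mul continuous_id)
  have hKcint : ∀ u v : ℝ, a ≤ u → u ≤ v → IntervalIntegrable (fun t => K t * Real.cos (ω*t)) volume u v := by
    intro u v hu huv
    exact (hint u v hu huv).mul_continuousOn hcont.continuousOn
  have hsplit : ∫ t in a..b, K t * Real.cos (ω*t)
      = (∫ t in (c 0)..(c N), K t * Real.cos (ω*t)) + ∫ t in (c N)..b, K t * Real.cos (ω*t) := by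
    rw [hc0, intervalIntegral.integral_add_adjacent_intervals (hKcint a (c N) le_rfl (hca N))
      (hKcint (c N) b (hca N) hcN)]
  have hsum : ∫ t in (c 0)..(c N), K t * Real.cos (ω*t)
      = ∑ k ∈ Finset.range N, ∫ t in (c k)..(c (k+1)), K t * Real.cos (ω*t) :=
    (intervalIntegral.sum_integral_adjacent_intervals (fun k _ => hKcint (c k) (c (k+1)) (hca k)
      (by rw [hcsucc k]; linarith))).symm
  have hper : ∀ k : ℕ, |∫ t in (c k)..(c (k+1)), K t * Real.cos (ω*t)|
      ≤ L * (K (c k) - K (c (k+1))) := by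
    intro k
    have e : c (k+1) = c k + L := hcsucc k
    rw [e]
    refine aux_period hω (hint _ _ (hca k) (by linarith)) ?_
    intro t ht
    have hta : a ≤ t := le_trans (hca k) ht.1
    constructor
    · exact hanti (Set.mem_Ici.mpr hta) (Set.mem_Ici.mpr (le_trans (hca k) (by linarith [ht.2]))) ht.2
    · exact hanti (Set.mem_Ici.mpr (hca k)) (Set.mem_Ici.mpr hta) ht.1
  have hsumbd : |∑ k ∈ Finset.range N, ∫ t in (c k)..(c (k+1)), K t * Real.cos (ω*t)|
      ≤ L * K a := by
    calc |∑ k ∈ Finset.range N, ∫ t in (c k)..(c (k+1)), K t * Real.cos (ω*t)|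
        ≤ ∑ k ∈ Finset.range N, |∫ t in (c k)..(c (k+1)), K t * Real.cos (ω*t)| :=
          Finset.abs_sum_le_sum_abs _ _
      _ ≤ ∑ k ∈ Finset.range N, L * (K (c k) - K (c (k+1))) :=
          Finset.sum_le_sum (fun k _ => hper k)
      _ = L * ∑ k ∈ Finset.range N, (K (c k) - K (c (k+1))) := by rw [Finset.mul_sum]
      _ = L * (K (c 0) - K (c N)) := by rw [Finset.sum_range_sub' (fun k => K (c k))]
      _ ≤ L * K a := by
          have := hnn (c N) (hca N)
          rw [hc0]
          nlinarith
  have hedge : |∫ t in (c N)..b, K t * Real.cos (ω*t)| ≤ L * K a := by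
    have hb : ∀ x ∈ Set.uIoc (c N) b, ‖K x * Real.cos (ω*x)‖ ≤ K (c N) := by
      intro x hx
      rw [Set.uIoc_of_le hcN] at hx
      have hxa : a ≤ x := le_trans (hca N) (le_of_lt hx.1)
      have h1 : K x ≤ K (c N) :=
        hanti (Set.mem_Ici.mpr (hca N)) (Set.mem_Ici.mpr hxa) (le_of_lt hx.1)
      have h2 : 0 ≤ K x := hnn x hxa
      rw [Real.norm_eq_abs, abs_mul, abs_of_nonneg h2]
      calc K x * |Real.cos (ω*x)| ≤ K x * 1 :=
            mul_le_mul_of_nonneg_left (Real.abs_cos_le_one _) h2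
        _ ≤ K (c N) := by linarith
    have := intervalIntegral.norm_integral_le_of_norm_le_const hb
    rw [Real.norm_eq_abs] at this
    have hKcN : K (c N) ≤ K a := by
      have := hanti (Set.mem_Ici.mpr le_rfl) (Set.mem_Ici.mpr (hca N)) (hca N)
      exact this
    have hKa : 0 ≤ K (c N) := hnn (c N) (hca N)
    calc |∫ t in (c N)..b, K t * Real.cos (ω*t)| ≤ K (c N) * |b - c N| := this
      _ ≤ K a * L := by
          have h1 : |b - c N| ≤ L := by rw [abs_of_nonneg (by linarith)]; linarith
          nlinarith
      _ = L * K a := by ring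
  rw [hsplit, hsum]
  have h4 : 4*π/ω * K a = L * K a + L * K a := by rw [hLdef]; ring
  rw [h4]
  calc |_ + _| ≤ _ + _ := abs_add_le _ _
    _ ≤ L * K a + L * K a := add_le_add hsumbd hedge


set_option maxHeartbeats 1000000 in
theorem stmt_1 (K : ℝ → ℝ) (C₁ : ℝ) (hC₁ : 0 < C₁)
    (hloc : LocallyIntegrableOn K (Ioi 0))
    (hint0 : IntegrableOn K (Ioc 0 1))
    (hdec : ∃ A > (0:ℝ), AntitoneOn K (Ici A))
    (hK0 : Tendsto K atTop (nhds 0))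
    (htK : Tendsto (fun t => t * K t) atTop (nhds C₁))
    (Kcos : ℝ → ℝ)
    (hKcos : ∀ ω > (0:ℝ),
      Tendsto (fun T => ∫ t in (0:ℝ)..T, K t * Real.cos (ω * t)) atTop (nhds (Kcos ω))) :
    Tendsto (fun ω => Kcos ω / |Real.log ω|) (nhdsWithin 0 (Ioi 0)) (nhds C₁) := by
  obtain ⟨A₀, hA₀pos, hA₀anti⟩ := hdec
  obtain ⟨A₁, hA₁⟩ := Metric.tendsto_atTop.mp htK 1 one_pos
  set D := C₁ + 1 with hDdef
  have hDpos : 0 < D := by rw [hDdef]; positivity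
  clear_value D
  set A := max (max A₀ 1) A₁ with hAdef
  have hA1 : (1:ℝ) ≤ A := le_trans (le_max_right A₀ 1) (le_max_left _ _)
  have hA0 : (0:ℝ) < A := lt_of_lt_of_le one_pos hA1
  have hanti : AntitoneOn K (Set.Ici A) :=
    hA₀anti.mono (Set.Ici_subset_Ici.mpr (le_trans (le_max_left _ _) (le_max_left _ _)))
  have hAA₁ : A₁ ≤ A := le_max_right _ _
  clear_value A
  have hnn : ∀ t, A ≤ t → 0 ≤ K t := by
    intro t ht
    refine le_of_tendsto hK0 ?_
    filter_upwards [eventually_ge_atTop t] with s hs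
    exact hanti (Set.mem_Ici.mpr ht) (Set.mem_Ici.mpr (le_trans ht hs)) hs
  have hD : ∀ t, A ≤ t → t * K t ≤ D := by
    intro t ht
    have h := hA₁ t (le_trans hAA₁ ht)
    rw [Real.dist_eq] at h
    have := (abs_lt.mp h).2
    rw [hDdef]; linarith
  have hKle : ∀ t, A ≤ t → K t ≤ D / t := by
    intro t ht
    have htpos : 0 < t := lt_of_lt_of_le hA0 ht
    rw [le_div_iff₀ htpos]
    nlinarith [hD t ht]
  -- integrability infrastructure
  have hintA : ∀ c d : ℝ, 0 < c → c ≤ d → IntervalIntegrable K volume c d := by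
    intro c d hc hcd
    rw [intervalIntegrable_iff_integrableOn_Ioc_of_le hcd]
    exact (hloc.integrableOn_compact_subset
      (fun x hx => Set.mem_Ioi.mpr (lt_of_lt_of_le hc hx.1)) isCompact_Icc).mono_set
      Set.Ioc_subset_Icc_self
  have hint0A : IntervalIntegrable K volume 0 A := by
    rw [intervalIntegrable_iff_integrableOn_Ioc_of_le hA0.le]
    have h2 : IntegrableOn K (Set.Icc 1 A) := hloc.integrableOn_compact_subset
      (fun x hx => Set.mem_Ioi.mpr (lt_of_lt_of_le one_pos hx.1)) isCompact_Icc
    refine (hint0.union h2).mono_set ?_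
    intro x hx
    rcases le_total x 1 with h | h
    · exact Or.inl ⟨hx.1, h⟩
    · exact Or.inr ⟨h, hx.2⟩
  have hcont : ∀ ω : ℝ, Continuous (fun t : ℝ => Real.cos (ω*t)) :=
    fun ω => Real.continuous_cos.comp (continuous_const.mul continuous_id)
  set M₀ := ∫ t in (0:ℝ)..A, |K t| with hM₀def
  have hlow : ∀ ω : ℝ, |∫ t in (0:ℝ)..A, K t * Real.cos (ω*t)| ≤ M₀ := by
    intro ω
    calc |∫ t in (0:ℝ)..A, K t * Real.cos (ω*t)|
        ≤ ∫ t in (0:ℝ)..A, |K t * Real.cos (ω*t)| :=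
          intervalIntegral.abs_integral_le_integral_abs hA0.le
      _ ≤ ∫ t in (0:ℝ)..A, |K t| := by
          refine intervalIntegral.integral_mono_on hA0.le
            (hint0A.mul_continuousOn (hcont ω).continuousOn).abs hint0A.abs ?_
          intro x _
          rw [abs_mul]
          calc |K x| * |Real.cos (ω*x)| ≤ |K x| * 1 :=
                mul_le_mul_of_nonneg_left (Real.abs_cos_le_one _) (abs_nonneg _)
            _ = |K x| := mul_one _
  have hM₀nn : 0 ≤ M₀ := by
    rw [hM₀def]
    exact intervalIntegral.integral_nonneg hA0.le (fun x _ => abs_nonneg _)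
  clear_value M₀
  -- main ε argument
  rw [Metric.tendsto_nhds]
  intro ε₀ hε₀
  set ε := ε₀/3 with hεdef
  have hε : 0 < ε := by rw [hεdef]; positivity
  clear_value ε
  obtain ⟨T₀, hT₀⟩ := Metric.tendsto_atTop.mp htK ε hε
  set Tε := max T₀ A with hTdef
  have hTA : A ≤ Tε := le_max_right _ _
  have hTT₀ : T₀ ≤ Tε := le_max_left _ _
  clear_value Tε
  have hT1 : (1:ℝ) ≤ Tε := le_trans hA1 hTA
  have hTpos : (0:ℝ) < Tε := lt_of_lt_of_le hA0 hTA
  have hlogT : 0 ≤ Real.log Tε := Real.log_nonneg hT1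
  have hKnear : ∀ t, Tε ≤ t → |t * K t - C₁| ≤ ε := by
    intro t ht
    have h := hT₀ t (le_trans hTT₀ ht)
    rw [Real.dist_eq] at h
    exact h.le
  set M₁ := |∫ t in A..Tε, K t| with hM₁def
  have hM₁abs : -M₁ ≤ (∫ t in A..Tε, K t) ∧ (∫ t in A..Tε, K t) ≤ M₁ := by
    rw [hM₁def]; exact ⟨neg_abs_le _, le_abs_self _⟩
  clear_value M₁
  set M := M₀ + M₁ + D/4 + 4*π*D + (C₁+ε) * Real.log Tε + 1 with hMdef
  have hMpos : 0 < M := by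
    have h8 : 0 ≤ (C₁+ε) * Real.log Tε := mul_nonneg (by positivity) hlogT
    have hπ := Real.pi_pos
    rw [hMdef]
    have h9 : 0 < 4*π*D := by positivity
    linarith
  clear_value M
  have hδ1 : Real.exp (-(M/ε)) < 1 := Real.exp_lt_one_iff.mpr (neg_lt_zero.mpr (by positivity))
  set δ := min (Real.exp (-(M/ε))) (1/Tε) with hδdef
  have hδpos : 0 < δ := by rw [hδdef]; exact lt_min (Real.exp_pos _) (by positivity)
  clear_value δ
  filter_upwards [Ioo_mem_nhdsGT_of_mem (Set.mem_Ico.mpr ⟨le_refl (0:ℝ), hδpos⟩)] with ω hωmem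
  obtain ⟨hωpos, hωδ⟩ := hωmem
  rw [hδdef] at hωδ
  set B := ω⁻¹ with hBdef
  have hBpos : 0 < B := by rw [hBdef]; positivity
  have hωB : ω * B = 1 := by rw [hBdef]; exact mul_inv_cancel₀ (ne_of_gt hωpos)
  have hTB : Tε ≤ B := by
    have h1 : ω < 1/Tε := lt_of_lt_of_le hωδ (min_le_right _ _)
    rw [lt_div_iff₀ hTpos] at h1
    nlinarith [hωB, hωpos]
  have hAB : A ≤ B := le_trans hTA hTB
  have hω1 : ω < 1 := lt_of_lt_of_le hωδ (le_trans (min_le_left _ _) hδ1.le)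
  have hlogω : Real.log ω < -(M/ε) := by
    calc Real.log ω < Real.log (Real.exp (-(M/ε))) :=
          Real.log_lt_log hωpos (lt_of_lt_of_le hωδ (min_le_left _ _))
      _ = -(M/ε) := Real.log_exp _
  set Lg := Real.log B with hLgdef
  have hLgeq : Lg = -Real.log ω := by rw [hLgdef, hBdef, Real.log_inv]
  have hLgM : M/ε < Lg := by rw [hLgeq]; linarith
  have hLgpos : 0 < Lg := lt_trans (by positivity) hLgM
  have habs : |Real.log ω| = Lg := by
    rw [abs_of_neg (Real.log_neg hωpos hω1), hLgeq]
  clear_value Lg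
  -- bounds for K between Tε and B
  have hptle : ∀ t ∈ Set.Icc Tε B, K t ≤ (C₁+ε) * (1/t) := by
    intro t ht
    have htpos : 0 < t := lt_of_lt_of_le hTpos ht.1
    have h2 := (abs_le.mp (hKnear t ht.1)).2
    rw [mul_one_div, le_div_iff₀ htpos]
    have := mul_comm t (K t); linarith
  have hptge : ∀ t ∈ Set.Icc Tε B, (C₁-ε) * (1/t) ≤ K t := by
    intro t ht
    have htpos : 0 < t := lt_of_lt_of_le hTpos ht.1
    have h2 := (abs_le.mp (hKnear t ht.1)).1
    rw [mul_one_div, div_le_iff₀ htpos]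
    have := mul_comm t (K t); linarith
  have hinvcont : ∀ c : ℝ, IntervalIntegrable (fun t : ℝ => c * (1/t)) volume Tε B := by
    intro c
    apply ContinuousOn.intervalIntegrable
    apply ContinuousOn.mul continuousOn_const
    apply ContinuousOn.div continuousOn_const continuousOn_id
    intro x hx
    rw [Set.uIcc_of_le hTB] at hx
    exact ne_of_gt (lt_of_lt_of_le hTpos hx.1)
  have hone : ∫ t in Tε..B, (1:ℝ)/t = Lg - Real.log Tε := by
    rw [integral_one_div (by rw [Set.uIcc_of_le hTB]; rintro ⟨h0, -⟩; linarith)]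
    rw [Real.log_div (ne_of_gt hBpos) (ne_of_gt hTpos), hLgdef]
  have hmidU : ∫ t in Tε..B, K t ≤ (C₁+ε) * (Lg - Real.log Tε) := by
    calc ∫ t in Tε..B, K t ≤ ∫ t in Tε..B, (C₁+ε)*(1/t) :=
          intervalIntegral.integral_mono_on hTB (hintA Tε B hTpos hTB) (hinvcont _) hptle
      _ = (C₁+ε) * (Lg - Real.log Tε) := by
          rw [intervalIntegral.integral_const_mul, hone]
  have hmidL : (C₁-ε) * (Lg - Real.log Tε) ≤ ∫ t in Tε..B, K t := by
    calc (C₁-ε) * (Lg - Real.log Tε) = ∫ t in Tε..B, (C₁-ε)*(1/t) := by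
          rw [intervalIntegral.integral_const_mul, hone]
      _ ≤ ∫ t in Tε..B, K t :=
          intervalIntegral.integral_mono_on hTB (hinvcont _) (hintA Tε B hTpos hTB) hptge
  -- cosine correction on [A,B]
  have hKintAB := hintA A B hA0 hAB
  have hKcosAB := hKintAB.mul_continuousOn (hcont ω).continuousOn
  have hcorr : |(∫ t in A..B, K t * Real.cos (ω*t)) - ∫ t in A..B, K t| ≤ D/4 := by
    have e : (∫ t in A..B, K t * Real.cos (ω*t)) - ∫ t in A..B, K t
        = ∫ t in A..B, (K t * Real.cos (ω*t) - K t) :=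
      (intervalIntegral.integral_sub hKcosAB hKintAB).symm
    rw [e]
    have hmono : ∫ t in A..B, |K t * Real.cos (ω*t) - K t| ≤ ∫ t in A..B, D*ω^2/2 * t := by
      refine intervalIntegral.integral_mono_on hAB (hKcosAB.sub hKintAB).abs
        ((continuous_const.mul continuous_id : Continuous fun t : ℝ => D*ω^2/2 * t).intervalIntegrable _ _) ?_
      intro t ht
      have htA : A ≤ t := ht.1
      have htpos : 0 < t := lt_of_lt_of_le hA0 htA
      have h1 : 0 ≤ K t := hnn t htA
      have h2 : K t ≤ D/t := hKle t htA
      have h3 : 1 - Real.cos (ω*t) ≤ (ω*t)^2/2 := by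
        have := Real.one_sub_sq_div_two_le_cos (x := ω*t); linarith
      have h4 : Real.cos (ω*t) ≤ 1 := Real.cos_le_one _
      have h5 : K t * Real.cos (ω*t) ≤ K t := by
        calc K t * Real.cos (ω*t) ≤ K t * 1 := mul_le_mul_of_nonneg_left h4 h1
          _ = K t := mul_one _
      have e2 : |K t * Real.cos (ω*t) - K t| = K t * (1 - Real.cos (ω*t)) := by
        rw [abs_of_nonpos (by linarith)]; ring
      rw [e2]
      calc K t * (1 - Real.cos (ω*t)) ≤ (D/t) * ((ω*t)^2/2) :=
            mul_le_mul h2 h3 (by linarith) (by positivity)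
        _ = D*ω^2/2 * t := by field_simp
    have hA2B : ∫ t in A..B, D*ω^2/2 * t = D*ω^2/2 * ((B^2 - A^2)/2) := by
      rw [intervalIntegral.integral_const_mul, integral_id]
    have hωB2 : ω^2 * B^2 = 1 := by rw [hBdef]; field_simp
    calc |∫ t in A..B, (K t * Real.cos (ω*t) - K t)|
        ≤ ∫ t in A..B, |K t * Real.cos (ω*t) - K t| :=
          intervalIntegral.abs_integral_le_integral_abs hAB
      _ ≤ D*ω^2/2 * ((B^2 - A^2)/2) := le_of_le_of_eq hmono hA2B
      _ = (D*(ω^2*B^2) - D*(ω^2*A^2))/4 := by ring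
      _ = (D - D*(ω^2*A^2))/4 := by rw [hωB2, mul_one]
      _ ≤ D/4 := by
          have h7 : 0 ≤ D*(ω^2*A^2) := by positivity
          linarith
  -- tail bound
  have htail : ∀ T, B ≤ T → |∫ t in B..T, K t * Real.cos (ω*t)| ≤ 4*π*D := by
    intro T hT
    have h := aux_tail hωpos hT (hanti.mono (Set.Ici_subset_Ici.mpr hAB))
      (fun t ht => hnn t (le_trans hAB ht))
      (fun u v hu huv => hintA u v (lt_of_lt_of_le hBpos hu) huv)
    refine le_trans h ?_
    have hKB : K B ≤ D * ω := by
      have h5 := hKle B hAB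
      rw [hBdef, div_eq_mul_inv, inv_inv] at h5
      exact h5
    calc 4*π/ω * K B ≤ 4*π/ω * (D*ω) :=
          mul_le_mul_of_nonneg_left hKB (by positivity)
      _ = 4*π*D := by field_simp
  -- splitting
  have hsplit3 : ∀ T, B ≤ T →
      ∫ t in (0:ℝ)..T, K t * Real.cos (ω*t)
      = (∫ t in (0:ℝ)..A, K t * Real.cos (ω*t)) + (∫ t in A..B, K t * Real.cos (ω*t))
        + ∫ t in B..T, K t * Real.cos (ω*t) := by
    intro T hT
    have i1 := hint0A.mul_continuousOn (hcont ω).continuousOn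
    have i3 := (hintA B T hBpos hT).mul_continuousOn (hcont ω).continuousOn
    rw [intervalIntegral.integral_add_adjacent_intervals i1 hKcosAB,
      intervalIntegral.integral_add_adjacent_intervals (i1.trans hKcosAB) i3]
  have hmidsplit : ∫ t in A..B, K t = (∫ t in A..Tε, K t) + ∫ t in Tε..B, K t :=
    (intervalIntegral.integral_add_adjacent_intervals (hintA A Tε hA0 hTA)
      (hintA Tε B hTpos hTB)).symm
  have hexpU : (C₁+ε)*(Lg - Real.log Tε) = (C₁+ε)*Lg - (C₁+ε)*Real.log Tε := by ring
  have hexpL : (C₁-ε)*(Lg - Real.log Tε) = (C₁-ε)*Lg - (C₁-ε)*Real.log Tε := by ring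
  have hTcmp : (C₁-ε)*Real.log Tε ≤ (C₁+ε)*Real.log Tε :=
    mul_le_mul_of_nonneg_right (by linarith) hlogT
  have hnonnegT : 0 ≤ (C₁+ε)*Real.log Tε := mul_nonneg (by positivity) hlogT
  have hub : ∀ T, B ≤ T →
      ∫ t in (0:ℝ)..T, K t * Real.cos (ω*t) ≤ (C₁+ε)*Lg + M := by
    intro T hT
    rw [hsplit3 T hT]
    have e1 := (abs_le.mp (hlow ω)).2
    have e2 := (abs_le.mp hcorr).2
    have e3 := (abs_le.mp (htail T hT)).2
    rw [hMdef]
    linarith [hmidU, hM₁abs.2, hmidsplit, hexpU]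
  have hlb : ∀ T, B ≤ T →
      (C₁-ε)*Lg - M ≤ ∫ t in (0:ℝ)..T, K t * Real.cos (ω*t) := by
    intro T hT
    rw [hsplit3 T hT]
    have e1 := (abs_le.mp (hlow ω)).1
    have e2 := (abs_le.mp hcorr).1
    have e3 := (abs_le.mp (htail T hT)).1
    rw [hMdef]
    linarith [hmidL, hM₁abs.1, hmidsplit, hexpL, hTcmp]
  have hKub : Kcos ω ≤ (C₁+ε)*Lg + M := by
    refine le_of_tendsto (hKcos ω hωpos) ?_
    filter_upwards [eventually_ge_atTop B] with T hT using hub T hT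
  have hKlb : (C₁-ε)*Lg - M ≤ Kcos ω := by
    refine ge_of_tendsto (hKcos ω hωpos) ?_
    filter_upwards [eventually_ge_atTop B] with T hT using hlb T hT
  have hMLg : M/Lg < ε := by
    rw [div_lt_iff₀ hLgpos]
    have := (div_lt_iff₀ hε).mp hLgM
    linarith
  rw [Real.dist_eq, habs, abs_lt]
  constructor
  · have h1 : (C₁-ε) - M/Lg ≤ Kcos ω / Lg := by
      rw [le_div_iff₀ hLgpos]
      have e : ((C₁-ε) - M/Lg)*Lg = (C₁-ε)*Lg - M := by field_simp
      rw [e]; exact hKlb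
    have hMLgnn : 0 ≤ M/Lg := by positivity
    linarith
  · have h1 : Kcos ω / Lg ≤ (C₁+ε) + M/Lg := by
      rw [div_le_iff₀ hLgpos]
      have e : ((C₁+ε) + M/Lg)*Lg = (C₁+ε)*Lg + M := by field_simp
      rw [e]; exact hKub
    linarith
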